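/- (Theorem 1, local regret bound for the time-smoothed online prox-grad method.) Let g : ℝⁿ → ℝ ∪ {+∞} be proper, convex and lower semicontinuous, η > 0, δ > 0, T ≥ 1, w ∈ {1, …, T}, and let f_t : ℝⁿ → ℝ be differentiable for t = 1, …, T (with f_t ≡ 0 for t ≤ 0). Suppose x₁, …, x_T ∈ ℝⁿ satisfy the stopping condition ‖P_η^g(x_t; ∇S_{t−1,w}(x_t))‖ ≤ δ/w for every t = 1, …, T (where S_{0,w} ≡ 0). Then the local regret satisfies Σ_{t=1}^T ‖P_η^g(x_t; ∇S_{t,w}(x_t))‖² ≤ (2/w²)·(T δ² + Σ_{t=1}^T ‖∇f_t(x_t) − ∇f_{t−w}(x_t)‖²). -/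

import Mathlib

noncomputable section

open Finset MeasureTheory
open scoped RealInnerProductSpace

/-- `g : ℝⁿ → ℝ ∪ {+∞}` is proper, convex and lower semicontinuous. -/
def ProperConvexLsc {n : ℕ} (g : EuclideanSpace ℝ (Fin n) → WithTop ℝ) : Prop :=
  (∃ x, g x ≠ ⊤) ∧ LowerSemicontinuous g ∧
    ∀ x y : EuclideanSpace ℝ (Fin n), ∀ a b : ℝ, 0 ≤ a → 0 ≤ b → a + b = 1 →
      g (a • x + b • y) ≤ (a : WithTop ℝ) * g x + (b : WithTop ℝ) * g y

/-- `p` is a minimizer of `z ↦ η·g(z) + ½‖u − z‖²`. -/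
def IsProxPt {n : ℕ} (g : EuclideanSpace ℝ (Fin n) → WithTop ℝ) (η : ℝ)
    (u p : EuclideanSpace ℝ (Fin n)) : Prop :=
  ∀ z : EuclideanSpace ℝ (Fin n),
    (η : WithTop ℝ) * g p + ((1 / 2 * ‖u - p‖ ^ 2 : ℝ) : WithTop ℝ) ≤
      (η : WithTop ℝ) * g z + ((1 / 2 * ‖u - z‖ ^ 2 : ℝ) : WithTop ℝ)

/-- `prox` is the proximal operator of `ηg`: `prox u` is the unique minimizer of
`z ↦ η·g(z) + ½‖u − z‖²`. -/
def IsProxFun {n : ℕ} (g : EuclideanSpace ℝ (Fin n) → WithTop ℝ) (η : ℝ)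
    (prox : EuclideanSpace ℝ (Fin n) → EuclideanSpace ℝ (Fin n)) : Prop :=
  ∀ u, IsProxPt g η u (prox u) ∧ ∀ q, IsProxPt g η u q → q = prox u

/-- The prox-grad residual `P_η^g(x; d) = (x − prox_{ηg}(x − η d))/η`. -/
def proxRes {n : ℕ} (prox : EuclideanSpace ℝ (Fin n) → EuclideanSpace ℝ (Fin n)) (η : ℝ)
    (x d : EuclideanSpace ℝ (Fin n)) : EuclideanSpace ℝ (Fin n) :=
  η⁻¹ • (x - prox (x - η • d))

lemma prox_pt_finite {n : ℕ} {g : EuclideanSpace ℝ (Fin n) → WithTop ℝ}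
    (hg : ∃ x, g x ≠ ⊤) {η : ℝ} (hη : 0 < η) {u p : EuclideanSpace ℝ (Fin n)}
    (hp : IsProxPt g η u p) : ∃ r : ℝ, g p = (r : WithTop ℝ) := by
  obtain ⟨x0, hx0⟩ := hg
  obtain ⟨r0, hr0⟩ := WithTop.ne_top_iff_exists.mp hx0
  have h := hp x0
  rw [← hr0] at h
  by_contra hc
  push_neg at hc
  have hptop : g p = ⊤ := by
    rcases eq_or_ne (g p) ⊤ with h' | h'
    · exact h'
    · obtain ⟨r, hr⟩ := WithTop.ne_top_iff_exists.mp h'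
      exact absurd hr.symm (hc r)
  rw [hptop] at h
  have hη' : (η : WithTop ℝ) ≠ 0 := by exact_mod_cast hη.ne'
  rw [WithTop.mul_top hη'] at h
  simp only [top_add] at h
  have : ((η * r0 + 1 / 2 * ‖u - x0‖ ^ 2 : ℝ) : WithTop ℝ) = ⊤ := by
    refine top_le_iff.mp ?_
    calc (⊤ : WithTop ℝ) ≤ _ := h
      _ = _ := by push_cast; ring_nf
  exact WithTop.coe_ne_top this

lemma prox_VI {n : ℕ} {g : EuclideanSpace ℝ (Fin n) → WithTop ℝ}
    (hconv : ∀ x y : EuclideanSpace ℝ (Fin n), ∀ a b : ℝ, 0 ≤ a → 0 ≤ b → a + b = 1 →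
      g (a • x + b • y) ≤ (a : WithTop ℝ) * g x + (b : WithTop ℝ) * g y)
    {η : ℝ} (hη : 0 < η) {u p z : EuclideanSpace ℝ (Fin n)}
    (hp : IsProxPt g η u p) {gp gz : ℝ} (hgp : g p = gp) (hgz : g z = gz) :
    ⟪u - p, z - p⟫ ≤ η * (gz - gp) := by
  have key : ∀ a : ℝ, 0 < a → a ≤ 1 →
      ⟪u - p, z - p⟫ ≤ η * (gz - gp) + a / 2 * ‖z - p‖ ^ 2 := by
    intro a ha ha1
    set za := (1 - a) • p + a • z with hza_def
    have hconv' := hconv p z (1 - a) a (by linarith) ha.le (by ring)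
    rw [hgp, hgz] at hconv'
    have hza_le : g za ≤ (((1 - a) * gp + a * gz : ℝ) : WithTop ℝ) := by
      calc g za ≤ _ := hconv'
        _ = _ := by push_cast; ring
    obtain ⟨gza, hgza⟩ : ∃ r : ℝ, g za = (r : WithTop ℝ) := by
      rcases eq_or_ne (g za) ⊤ with h' | h'
      · rw [h'] at hza_le
        exact absurd (top_le_iff.mp hza_le) WithTop.coe_ne_top
      · obtain ⟨r, hr⟩ := WithTop.ne_top_iff_exists.mp h'
        exact ⟨r, hr.symm⟩
    have hza_le' : gza ≤ (1 - a) * gp + a * gz := by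
      rw [hgza] at hza_le; exact_mod_cast hza_le
    have hmin := hp za
    rw [hgp, hgza] at hmin
    have hmin' : η * gp + 1 / 2 * ‖u - p‖ ^ 2 ≤ η * gza + 1 / 2 * ‖u - za‖ ^ 2 := by
      have : ((η * gp + 1 / 2 * ‖u - p‖ ^ 2 : ℝ) : WithTop ℝ) ≤
          ((η * gza + 1 / 2 * ‖u - za‖ ^ 2 : ℝ) : WithTop ℝ) := by
        calc ((η * gp + 1 / 2 * ‖u - p‖ ^ 2 : ℝ) : WithTop ℝ)
            = _ := by push_cast; ring_nf
          _ ≤ _ := hmin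
          _ = _ := by push_cast; ring_nf
      exact_mod_cast this
    have hdiff : u - za = (u - p) - a • (z - p) := by
      rw [hza_def]
      rw [sub_smul, one_smul, smul_sub]
      abel
    have hnorm : ‖u - za‖ ^ 2 =
        ‖u - p‖ ^ 2 - 2 * a * ⟪u - p, z - p⟫ + a ^ 2 * ‖z - p‖ ^ 2 := by
      rw [hdiff, norm_sub_sq_real, real_inner_smul_right, norm_smul]
      simp only [Real.norm_eq_abs, mul_pow, sq_abs]
      ring
    have hmul := mul_le_mul_of_nonneg_left hza_le' hη.le
    have h4 : a * ⟪u - p, z - p⟫ ≤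
        a * (η * (gz - gp) + a / 2 * ‖z - p‖ ^ 2) := by nlinarith
    exact le_of_mul_le_mul_left h4 ha
  refine le_of_forall_pos_le_add ?_
  intro ε hε
  set C := ‖z - p‖ ^ 2 with hC_def
  have hC : 0 ≤ C := by positivity
  set a := min 1 (2 * ε / (C + 1)) with ha_def
  have ha : 0 < a := lt_min one_pos (by positivity)
  have ha1 : a ≤ 1 := min_le_left _ _
  have h5 : a ≤ 2 * ε / (C + 1) := min_le_right _ _
  have h6 : a * (C + 1) ≤ 2 * ε := by
    rw [← le_div_iff₀ (by positivity)]; exact h5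
  have h7 : a / 2 * C ≤ ε := by nlinarith
  have := key a ha ha1
  linarith

lemma prox_nonexp {n : ℕ} {g : EuclideanSpace ℝ (Fin n) → WithTop ℝ}
    (hg : ProperConvexLsc g) {η : ℝ} (hη : 0 < η)
    {u v p q : EuclideanSpace ℝ (Fin n)}
    (hp : IsProxPt g η u p) (hq : IsProxPt g η v q) :
    ‖p - q‖ ≤ ‖u - v‖ := by
  obtain ⟨hproper, _, hconv⟩ := hg
  obtain ⟨gp, hgp⟩ := prox_pt_finite hproper hη hp
  obtain ⟨gq, hgq⟩ := prox_pt_finite hproper hη hq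
  have h1 : ⟪u - p, q - p⟫ ≤ η * (gq - gp) := prox_VI hconv hη hp hgp hgq
  have h2 : ⟪v - q, p - q⟫ ≤ η * (gp - gq) := prox_VI hconv hη hq hgq hgp
  have e1 : ⟪u - p, p - q⟫ = -⟪u - p, q - p⟫ := by
    rw [show p - q = -(q - p) by abel, inner_neg_right]
  have e : ⟪u - v, p - q⟫ =
      ⟪u - p, p - q⟫ - ⟪v - q, p - q⟫ + ⟪p - q, p - q⟫ := by
    rw [← inner_sub_left, ← inner_add_left]
    congr 1
    abel
  have h3 : ‖p - q‖ ^ 2 ≤ ⟪u - v, p - q⟫ := by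
    rw [e, e1, real_inner_self_eq_norm_sq]
    linarith
  have h4 : ⟪u - v, p - q⟫ ≤ ‖u - v‖ * ‖p - q‖ := real_inner_le_norm _ _
  by_contra hcon
  push_neg at hcon
  nlinarith [norm_nonneg (u - v), norm_nonneg (p - q)]

/-- Theorem 1: local regret bound for the time-smoothed online prox-grad
method.  Here `f t = 0` for `t ≤ 0`, `f' t x` is the gradient `∇f_t(x)`, and the gradient of
the sliding average `S_{t,w}` at `x` is `(1/w) Σ_{i=t−w+1}^t f' i x`.  If the iterates satisfy
the stopping rule `‖P_η^g(x_t; ∇S_{t−1,w}(x_t))‖ ≤ δ/w`, then the local regret is at most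
`(2/w²)(Tδ² + Σ_t ‖∇f_t(x_t) − ∇f_{t−w}(x_t)‖²)`. -/
theorem stmt3 {n : ℕ} (g : EuclideanSpace ℝ (Fin n) → WithTop ℝ)
    (hg : ProperConvexLsc g) (η δ : ℝ) (hη : 0 < η) (hδ : 0 < δ)
    (prox : EuclideanSpace ℝ (Fin n) → EuclideanSpace ℝ (Fin n))
    (hprox : IsProxFun g η prox)
    (T w : ℕ) (hT : 1 ≤ T) (hw1 : 1 ≤ w) (hwT : w ≤ T)
    (f : ℤ → EuclideanSpace ℝ (Fin n) → ℝ)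
    (f' : ℤ → EuclideanSpace ℝ (Fin n) → EuclideanSpace ℝ (Fin n))
    (hf0 : ∀ t ≤ (0 : ℤ), ∀ z, f t z = 0) (hf'0 : ∀ t ≤ (0 : ℤ), ∀ z, f' t z = 0)
    (hgrad : ∀ t z, HasGradientAt (f t) (f' t z) z)
    (x : ℤ → EuclideanSpace ℝ (Fin n))
    (hstop : ∀ t ∈ Finset.Icc (1 : ℤ) T,
      ‖proxRes prox η (x t) ((w : ℝ)⁻¹ • ∑ i ∈ Finset.Icc (t - w) (t - 1), f' i (x t))‖ ≤
        δ / w) :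
    ∑ t ∈ Finset.Icc (1 : ℤ) T,
        ‖proxRes prox η (x t) ((w : ℝ)⁻¹ • ∑ i ∈ Finset.Icc (t - w + 1) t, f' i (x t))‖ ^ 2 ≤
      2 / (w : ℝ) ^ 2 *
        ((T : ℝ) * δ ^ 2 +
          ∑ t ∈ Finset.Icc (1 : ℤ) T, ‖f' t (x t) - f' (t - w) (x t)‖ ^ 2) := by
  have hw0 : (0 : ℝ) < w := by exact_mod_cast hw1
  have hper : ∀ t ∈ Finset.Icc (1 : ℤ) (T : ℤ),
      ‖proxRes prox η (x t) ((w : ℝ)⁻¹ • ∑ i ∈ Finset.Icc (t - w + 1) t, f' i (x t))‖ ^ 2 ≤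
        2 / (w : ℝ) ^ 2 * δ ^ 2 + 2 / (w : ℝ) ^ 2 * ‖f' t (x t) - f' (t - w) (x t)‖ ^ 2 := by
    intro t ht
    set X := x t with hX
    set d1 := (w : ℝ)⁻¹ • ∑ i ∈ Finset.Icc (t - w) (t - 1), f' i X with hd1
    set d2 := (w : ℝ)⁻¹ • ∑ i ∈ Finset.Icc (t - w + 1) t, f' i X with hd2
    set Δ := f' t X - f' (t - w) X with hΔ
    -- sum telescoping identity
    have hA : Finset.Icc (t - w) t = insert (t - w) (Finset.Icc (t - w + 1) t) := by
      ext i; simp only [Finset.mem_Icc, Finset.mem_insert]; omega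
    have hB : Finset.Icc (t - w) t = insert t (Finset.Icc (t - w) (t - 1)) := by
      have hwz : (1 : ℤ) ≤ (w : ℤ) := by exact_mod_cast hw1
      ext i; simp only [Finset.mem_Icc, Finset.mem_insert]; omega
    have hnA : (t - w) ∉ Finset.Icc (t - w + 1) t := by
      simp only [Finset.mem_Icc]; omega
    have hnB : t ∉ Finset.Icc (t - w) (t - 1) := by
      simp only [Finset.mem_Icc]; omega
    have e1 : ∑ i ∈ Finset.Icc (t - w) t, f' i X =
        f' (t - w) X + ∑ i ∈ Finset.Icc (t - w + 1) t, f' i X := by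
      rw [hA, Finset.sum_insert hnA]
    have e2 : ∑ i ∈ Finset.Icc (t - w) t, f' i X =
        f' t X + ∑ i ∈ Finset.Icc (t - w) (t - 1), f' i X := by
      rw [hB, Finset.sum_insert hnB]
    have hsum : (∑ i ∈ Finset.Icc (t - w + 1) t, f' i X) -
        (∑ i ∈ Finset.Icc (t - w) (t - 1), f' i X) = Δ := by
      have h := e1.symm.trans e2
      rw [hΔ, sub_eq_sub_iff_add_eq_add]
      exact (add_comm _ _).trans h
    have hd21 : d2 - d1 = (w : ℝ)⁻¹ • Δ := by
      rw [hd1, hd2, ← smul_sub, hsum]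
    -- nonexpansiveness
    have hne : ‖prox (X - η • d2) - prox (X - η • d1)‖ ≤
        ‖(X - η • d2) - (X - η • d1)‖ :=
      prox_nonexp hg hη (hprox (X - η • d2)).1 (hprox (X - η • d1)).1
    have hargs : (X - η • d2) - (X - η • d1) = -(η • (d2 - d1)) := by
      rw [smul_sub]; abel
    have hargnorm : ‖(X - η • d2) - (X - η • d1)‖ = η * ‖d2 - d1‖ := by
      rw [hargs, norm_neg, norm_smul, Real.norm_eq_abs, abs_of_pos hη]
    have hrdiff : proxRes prox η X d2 - proxRes prox η X d1 =
        η⁻¹ • (prox (X - η • d1) - prox (X - η • d2)) := by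
      simp only [proxRes]; rw [← smul_sub]; congr 1; abel
    have hnd : ‖d2 - d1‖ = (w : ℝ)⁻¹ * ‖Δ‖ := by
      rw [hd21, norm_smul, Real.norm_eq_abs, abs_of_pos (inv_pos.mpr hw0)]
    have hrdiffnorm : ‖proxRes prox η X d2 - proxRes prox η X d1‖ ≤ (w : ℝ)⁻¹ * ‖Δ‖ := by
      rw [hrdiff, norm_smul, Real.norm_eq_abs, abs_of_pos (inv_pos.mpr hη), ← hnd]
      calc η⁻¹ * ‖prox (X - η • d1) - prox (X - η • d2)‖
          ≤ η⁻¹ * ‖(X - η • d2) - (X - η • d1)‖ := by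
            rw [show prox (X - η • d1) - prox (X - η • d2)
                  = -(prox (X - η • d2) - prox (X - η • d1)) by abel, norm_neg]
            exact mul_le_mul_of_nonneg_left hne (inv_pos.mpr hη).le
        _ = ‖d2 - d1‖ := by rw [hargnorm, ← mul_assoc, inv_mul_cancel₀ hη.ne', one_mul]
    have hr1 : ‖proxRes prox η X d1‖ ≤ δ / w := by
      have := hstop t ht
      rw [← hX, ← hd1] at this
      exact this
    have er : proxRes prox η X d1 + (proxRes prox η X d2 - proxRes prox η X d1) =
        proxRes prox η X d2 := by abel
    have hr2 : ‖proxRes prox η X d2‖ ≤ δ / w + (w : ℝ)⁻¹ * ‖Δ‖ := by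
      calc ‖proxRes prox η X d2‖
          = ‖proxRes prox η X d1 + (proxRes prox η X d2 - proxRes prox η X d1)‖ := by
            rw [er]
        _ ≤ ‖proxRes prox η X d1‖ + ‖proxRes prox η X d2 - proxRes prox η X d1‖ :=
            norm_add_le _ _
        _ ≤ δ / w + (w : ℝ)⁻¹ * ‖Δ‖ := add_le_add hr1 hrdiffnorm
    have hsq : ‖proxRes prox η X d2‖ ^ 2 ≤ (δ / w + (w : ℝ)⁻¹ * ‖Δ‖) ^ 2 :=
      pow_le_pow_left₀ (norm_nonneg _) hr2 2
    have hfin : (δ / w + (w : ℝ)⁻¹ * ‖Δ‖) ^ 2 ≤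
        2 / (w : ℝ) ^ 2 * δ ^ 2 + 2 / (w : ℝ) ^ 2 * ‖Δ‖ ^ 2 := by
      have hq : (δ / w + (w : ℝ)⁻¹ * ‖Δ‖) ^ 2 = (δ + ‖Δ‖) ^ 2 / (w : ℝ) ^ 2 := by
        field_simp
      have hq2 : (δ + ‖Δ‖) ^ 2 ≤ 2 * δ ^ 2 + 2 * ‖Δ‖ ^ 2 := by nlinarith [sq_nonneg (δ - ‖Δ‖)]
      rw [hq, show 2 / (w : ℝ) ^ 2 * δ ^ 2 + 2 / (w : ℝ) ^ 2 * ‖Δ‖ ^ 2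
            = (2 * δ ^ 2 + 2 * ‖Δ‖ ^ 2) / (w : ℝ) ^ 2 by ring]
      exact div_le_div_of_nonneg_right hq2 (by positivity) |>.trans_eq rfl
    exact hsq.trans hfin
  calc ∑ t ∈ Finset.Icc (1 : ℤ) (T : ℤ),
        ‖proxRes prox η (x t) ((w : ℝ)⁻¹ • ∑ i ∈ Finset.Icc (t - w + 1) t, f' i (x t))‖ ^ 2
      ≤ ∑ t ∈ Finset.Icc (1 : ℤ) (T : ℤ),
        (2 / (w : ℝ) ^ 2 * δ ^ 2 + 2 / (w : ℝ) ^ 2 * ‖f' t (x t) - f' (t - w) (x t)‖ ^ 2) :=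
        Finset.sum_le_sum hper
    _ = 2 / (w : ℝ) ^ 2 *
        ((T : ℝ) * δ ^ 2 +
          ∑ t ∈ Finset.Icc (1 : ℤ) T, ‖f' t (x t) - f' (t - w) (x t)‖ ^ 2) := by
        rw [Finset.sum_add_distrib, Finset.sum_const, ← Finset.mul_sum]
        have hcard : (Finset.Icc (1 : ℤ) (T : ℤ)).card = T := by
          rw [Int.card_Icc]; omega
        rw [hcard, nsmul_eq_mul]
        ring
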